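/- For every k ≥ 2, the k-chain query q(x_0, x_k) :- R_1(x_0,x_1), R_2(x_1,x_2), …, R_k(x_{k−1},x_k), whose head variables x_0 and x_k are treated as constants, has exactly C_{k−1} minimal safe dissociations (equivalently, minimal query plans), where C_n = (1/(n+1))·binom(2n, n) is the n-th Catalan number; in particular, the 8-chain query has 429 minimal safe dissociations. -/

import Mathlib

open scoped Classical

namespace ChainAux

/-- laminar family condition on the index range `(a,b)` -/
def Lam (a b : ℕ) (S : ℕ → Finset ℕ) : Prop :=
  ∀ x y, a < x → x < b → a < y → y < b →
    S x ⊆ S y ∨ S y ⊆ S x ∨ S x ∩ S y = ∅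

def Good (a b : ℕ) (S : ℕ → Finset ℕ) : Prop :=
  (∀ x, a < x → x < b → x - 1 ∈ S x ∧ x ∈ S x ∧ S x ⊆ Finset.Ico a b) ∧
  (∀ x, ¬(a < x ∧ x < b) → S x = ∅) ∧ Lam a b S

def MinGood (a b : ℕ) (S : ℕ → Finset ℕ) : Prop :=
  Good a b S ∧ ∀ S', Good a b S' → (∀ x, S' x ⊆ S x) → S' = S

lemma exists_root {a b : ℕ} {S : ℕ → Finset ℕ} (hG : Good a b S) (h2 : a + 2 ≤ b) :
    ∃ j, a < j ∧ j < b ∧ S j = Finset.Ico a b := by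
  obtain ⟨hM, hO, hL⟩ := hG
  obtain ⟨j, hj, hmax⟩ := Finset.exists_max_image (Finset.Ioo a b)
    (fun x => (S x).card) ⟨a + 1, by simp; omega⟩
  simp only [Finset.mem_Ioo] at hj
  -- any in-range set intersecting S j is contained in S j
  have key : ∀ x, a < x → x < b → (S x ∩ S j).Nonempty → S x ⊆ S j := by
    intro x hx1 hx2 hne
    rcases hL x j hx1 hx2 hj.1 hj.2 with h | h | h
    · exact h
    · have hcard := hmax x (by simp [Finset.mem_Ioo]; omega)
      have := Finset.eq_of_subset_of_card_le h hcard
      rw [this]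
    · rw [h] at hne; exact absurd hne (by simp)
  have up : ∀ d, j + d < b → S (j + d) ⊆ S j := by
    intro d
    induction d with
    | zero => intro _; simp
    | succ d ih =>
      intro hd
      have hih : S (j + d) ⊆ S j := ih (by omega)
      apply key _ (by omega) hd
      refine ⟨j + d, Finset.mem_inter.2 ⟨?_, hih ?_⟩⟩
      · have := (hM (j + d + 1) (by omega) (by omega)).1
        rw [← Nat.add_assoc]; simpa using this
      · exact (hM (j + d) (by omega) (by omega)).2.1
  have down : ∀ d, a < j - d → S (j - d) ⊆ S j := by
    intro d
    induction d with
    | zero => intro _; simp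
    | succ d ih =>
      intro hd
      have hdj : d + 1 ≤ j := by omega
      have hih : S (j - d) ⊆ S j := ih (by omega)
      apply key _ hd (by omega)
      refine ⟨j - (d + 1), Finset.mem_inter.2 ⟨?_, hih ?_⟩⟩
      · exact (hM (j - (d+1)) hd (by omega)).2.1
      · have := (hM (j - d) (by omega) (by omega)).1
        have he : j - d - 1 = j - (d + 1) := by omega
        rwa [he] at this
  have all : ∀ x, a < x → x < b → S x ⊆ S j := by
    intro x hx1 hx2
    rcases le_or_gt j x with h | h
    · have : x = j + (x - j) := by omega
      rw [this]; exact up _ (by omega)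
    · have : x = j - (j - x) := by omega
      rw [this]; exact down _ (by omega)
  refine ⟨j, hj.1, hj.2, ?_⟩
  apply Finset.Subset.antisymm (hM j hj.1 hj.2).2.2
  intro t ht
  simp only [Finset.mem_Ico] at ht
  rcases eq_or_lt_of_le ht.1 with h | h
  · have := (hM (a+1) (by omega) (by omega)).1
    have : t ∈ S (a + 1) := by simpa [← h] using this
    exact all (a+1) (by omega) (by omega) this
  · exact all t h ht.2 ((hM t h ht.2).2.1)

/-- gate a family to a subrange -/
def gate (a b : ℕ) (S : ℕ → Finset ℕ) : ℕ → Finset ℕ :=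
  fun x => if a < x ∧ x < b then S x else ∅

lemma gate_pos {a b x : ℕ} {S : ℕ → Finset ℕ} (h1 : a < x) (h2 : x < b) :
    gate a b S x = S x := if_pos ⟨h1, h2⟩

lemma gate_neg {a b x : ℕ} {S : ℕ → Finset ℕ} (h : ¬(a < x ∧ x < b)) :
    gate a b S x = ∅ := if_neg h

/-- combine two families with a root at `j` -/
def combine (a j b : ℕ) (L R : ℕ → Finset ℕ) : ℕ → Finset ℕ :=
  fun x => if x = j then Finset.Ico a b else if x < j then L x else R x

lemma gate_good {a b j : ℕ} {S : ℕ → Finset ℕ} (hG : Good a b S)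
    (hj : j < b) (hhalf : ∀ x, a < x → x < j → S x ⊆ Finset.Ico a j) :
    Good a j (gate a j S) := by
  obtain ⟨hM, hO, hL⟩ := hG
  refine ⟨?_, ?_, ?_⟩
  · intro x hx1 hx2
    have h := hM x hx1 (by omega)
    simp only [gate, hx1, hx2, and_self, if_true]
    exact ⟨h.1, h.2.1, hhalf x hx1 hx2⟩
  · intro x hx; rw [gate_neg hx]
  · intro x y hx1 hx2 hy1 hy2
    simp only [gate, hx1, hx2, hy1, hy2, and_self, if_true]
    exact hL x y hx1 (by omega) hy1 (by omega)

lemma gate_good_right {a b j : ℕ} {S : ℕ → Finset ℕ} (hG : Good a b S)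
    (hj : a < j) (hhalf : ∀ x, j < x → x < b → S x ⊆ Finset.Ico j b) :
    Good j b (gate j b S) := by
  obtain ⟨hM, hO, hL⟩ := hG
  refine ⟨?_, ?_, ?_⟩
  · intro x hx1 hx2
    have h := hM x (by omega) hx2
    simp only [gate, hx1, hx2, and_self, if_true]
    exact ⟨h.1, h.2.1, hhalf x hx1 hx2⟩
  · intro x hx; rw [gate_neg hx]
  · intro x y hx1 hx2 hy1 hy2
    simp only [gate, hx1, hx2, hy1, hy2, and_self, if_true]
    exact hL x y (by omega) hx2 (by omega) hy2

lemma combine_good {a j b : ℕ} {L R : ℕ → Finset ℕ}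
    (hL : Good a j L) (hR : Good j b R) (haj : a < j) (hjb : j < b) :
    Good a b (combine a j b L R) := by
  obtain ⟨hLM, hLO, hLl⟩ := hL
  obtain ⟨hRM, hRO, hRl⟩ := hR
  have hval : ∀ x, a < x → x < b →
      (combine a j b L R x = Finset.Ico a b ∧ x = j) ∨
      (combine a j b L R x = L x ∧ a < x ∧ x < j) ∨
      (combine a j b L R x = R x ∧ j < x ∧ x < b) := by
    intro x hx1 hx2
    by_cases h : x = j
    · exact Or.inl ⟨by simp [combine, h], h⟩
    · rcases lt_or_gt_of_ne h with h' | h'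
      · exact Or.inr (Or.inl ⟨by simp [combine, h, h'], hx1, h'⟩)
      · exact Or.inr (Or.inr ⟨by simp [combine, h, not_lt_of_gt h'], h', hx2⟩)
  have hsub : ∀ x, a < x → x < b → combine a j b L R x ⊆ Finset.Ico a b := by
    intro x hx1 hx2
    rcases hval x hx1 hx2 with ⟨he, _⟩ | ⟨he, h1, h2⟩ | ⟨he, h1, h2⟩
    · rw [he]
    · rw [he]; exact (hLM x h1 h2).2.2.trans (Finset.Ico_subset_Ico le_rfl (by omega))
    · rw [he]; exact (hRM x h1 h2).2.2.trans (Finset.Ico_subset_Ico (by omega) le_rfl)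
  refine ⟨?_, ?_, ?_⟩
  · intro x hx1 hx2
    refine ⟨?_, ?_, hsub x hx1 hx2⟩ <;>
    · rcases hval x hx1 hx2 with ⟨he, h⟩ | ⟨he, h1, h2⟩ | ⟨he, h1, h2⟩
      · rw [he]; simp [Finset.mem_Ico]; omega
      · rw [he]; first
          | exact (hLM x h1 h2).1
          | exact (hLM x h1 h2).2.1
      · rw [he]; first
          | exact (hRM x h1 h2).1
          | exact (hRM x h1 h2).2.1
  · intro x hx
    have hxj : x ≠ j := by omega
    by_cases h : x < j
    · simp [combine, hxj, h]; exact hLO x (by omega)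
    · simp [combine, hxj, h]; exact hRO x (by omega)
  · intro x y hx1 hx2 hy1 hy2
    have hLb : ∀ z, a < z → z < j → L z ⊆ Finset.Ico a b := fun z h1 h2 =>
      (hLM z h1 h2).2.2.trans (Finset.Ico_subset_Ico le_rfl (by omega))
    have hRb : ∀ z, j < z → z < b → R z ⊆ Finset.Ico a b := fun z h1 h2 =>
      (hRM z h1 h2).2.2.trans (Finset.Ico_subset_Ico (by omega) le_rfl)
    have hdisj : ∀ u v, a < u → u < j → j < v → v < b → L u ∩ R v = ∅ := by
      intro u v h1 h2 h3 h4
      apply Finset.eq_empty_of_forall_notMem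
      intro t ht
      rw [Finset.mem_inter] at ht
      have e1 := (hLM u h1 h2).2.2 ht.1
      have e2 := (hRM v h3 h4).2.2 ht.2
      simp only [Finset.mem_Ico] at e1 e2; omega
    rcases hval x hx1 hx2 with ⟨hex, hxj⟩ | ⟨hex, hx1', hx2'⟩ | ⟨hex, hx1', hx2'⟩ <;>
      rcases hval y hy1 hy2 with ⟨hey, hyj⟩ | ⟨hey, hy1', hy2'⟩ | ⟨hey, hy1', hy2'⟩ <;>
      rw [hex, hey]
    · left; exact Finset.Subset.refl _
    · right; left; exact hLb y hy1' hy2'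
    · right; left; exact hRb y hy1' hy2'
    · left; exact hLb x hx1' hx2'
    · rcases hLl x y hx1' hx2' hy1' hy2' with h | h | h
      exacts [Or.inl h, Or.inr (Or.inl h), Or.inr (Or.inr h)]
    · right; right; exact hdisj x y hx1' hx2' hy1' hy2'
    · left; exact hRb x hx1' hx2'
    · right; right
      rw [Finset.inter_comm]; exact hdisj y x hy1' hy2' hx1' hx2'
    · rcases hRl x y hx1' hx2' hy1' hy2' with h | h | h
      exacts [Or.inl h, Or.inr (Or.inl h), Or.inr (Or.inr h)]


lemma combine_lt {a j b : ℕ} {L R : ℕ → Finset ℕ} {x : ℕ} (h : x < j) :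
    combine a j b L R x = L x := by
  simp [combine, h, Nat.ne_of_lt h]

lemma combine_gt {a j b : ℕ} {L R : ℕ → Finset ℕ} {x : ℕ} (h : j < x) :
    combine a j b L R x = R x := by
  have h2 : ¬ x < j := by omega
  simp [combine, Nat.ne_of_gt h, h2]

lemma combine_root {a j b : ℕ} {L R : ℕ → Finset ℕ} :
    combine a j b L R j = Finset.Ico a b := by simp [combine]

lemma combine_minGood {a j b : ℕ} {L R : ℕ → Finset ℕ}
    (hL : MinGood a j L) (hR : MinGood j b R) (haj : a < j) (hjb : j < b) :
    MinGood a b (combine a j b L R) := by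
  refine ⟨combine_good hL.1 hR.1 haj hjb, ?_⟩
  intro S' hG' hle
  obtain ⟨j', h1, h2, hroot⟩ := exists_root hG' (by omega)
  have hsub : Finset.Ico a b ⊆ combine a j b L R j' := hroot ▸ hle j'
  have hjj : j' = j := by
    by_contra hne
    rcases lt_or_gt_of_ne hne with h | h
    · rw [combine_lt h] at hsub
      have hb : b - 1 ∈ Finset.Ico a b := by simp [Finset.mem_Ico]; omega
      have := (hL.1.1 j' h1 h).2.2 (hsub hb)
      simp only [Finset.mem_Ico] at this; omega
    · rw [combine_gt h] at hsub
      have ha : a ∈ Finset.Ico a b := by simp [Finset.mem_Ico]; omega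
      have := (hR.1.1 j' h h2).2.2 (hsub ha)
      simp only [Finset.mem_Ico] at this; omega
  subst hjj
  have hhalfL : ∀ x, a < x → x < j' → S' x ⊆ Finset.Ico a j' := by
    intro x hx1 hx2
    have := hle x
    rw [combine_lt hx2] at this
    exact this.trans (hL.1.1 x hx1 hx2).2.2
  have hhalfR : ∀ x, j' < x → x < b → S' x ⊆ Finset.Ico j' b := by
    intro x hx1 hx2
    have := hle x
    rw [combine_gt hx1] at this
    exact this.trans (hR.1.1 x hx1 hx2).2.2
  have hGL : Good a j' (gate a j' S') := gate_good hG' (by omega) hhalfL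
  have hGR : Good j' b (gate j' b S') := gate_good_right hG' (by omega) hhalfR
  have hLe : gate a j' S' = L := by
    refine hL.2 _ hGL ?_
    intro x
    by_cases h : a < x ∧ x < j'
    · rw [gate_pos h.1 h.2]
      have := hle x; rwa [combine_lt h.2] at this
    · rw [gate_neg h]; exact Finset.empty_subset _
  have hRe : gate j' b S' = R := by
    refine hR.2 _ hGR ?_
    intro x
    by_cases h : j' < x ∧ x < b
    · rw [gate_pos h.1 h.2]
      have := hle x; rwa [combine_gt h.1] at this
    · rw [gate_neg h]; exact Finset.empty_subset _
  funext x
  rcases eq_or_ne x j' with rfl | hne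
  · rw [combine_root, hroot]
  · rcases lt_or_gt_of_ne hne with h | h
    · rw [combine_lt h, ← hLe]
      by_cases hx : a < x
      · rw [gate_pos hx h]
      · rw [gate_neg (by omega : ¬(a < x ∧ x < j'))]
        exact hG'.2.1 x (by omega)
    · rw [combine_gt h, ← hRe]
      by_cases hx : x < b
      · rw [gate_pos h hx]
      · rw [gate_neg (by omega : ¬(j' < x ∧ x < b))]
        exact hG'.2.1 x (by omega)

lemma split_of_min {a b : ℕ} {S : ℕ → Finset ℕ} (hS : MinGood a b S) (h2 : a + 2 ≤ b) :
    ∃ j, a < j ∧ j < b ∧ S = combine a j b (gate a j S) (gate j b S) ∧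
      MinGood a j (gate a j S) ∧ MinGood j b (gate j b S) := by
  obtain ⟨hG, hmin⟩ := hS
  obtain ⟨j, hj1, hj2, hroot⟩ := exists_root hG h2
  -- first, shrink to halves to derive the halves property of S
  set L0 : ℕ → Finset ℕ := fun x =>
    if a < x ∧ x < j then S x ∩ Finset.Ico a j else ∅ with hL0
  set R0 : ℕ → Finset ℕ := fun x =>
    if j < x ∧ x < b then S x ∩ Finset.Ico j b else ∅ with hR0
  have hGL0 : Good a j L0 := by
    refine ⟨?_, ?_, ?_⟩
    · intro x hx1 hx2
      have hm := hG.1 x hx1 (by omega)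
      simp only [hL0, if_pos (show a < x ∧ x < j from ⟨hx1, hx2⟩)]
      refine ⟨Finset.mem_inter.2 ⟨hm.1, by simp [Finset.mem_Ico]; omega⟩,
        Finset.mem_inter.2 ⟨hm.2.1, by simp [Finset.mem_Ico]; omega⟩,
        Finset.inter_subset_right⟩
    · intro x hx; simp only [hL0, if_neg hx]
    · intro x y hx1 hx2 hy1 hy2
      simp only [hL0, if_pos (show a < x ∧ x < j from ⟨hx1, hx2⟩), if_pos (show a < y ∧ y < j from ⟨hy1, hy2⟩)]
      rcases hG.2.2 x y hx1 (by omega) hy1 (by omega) with h | h | h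
      · left; exact Finset.inter_subset_inter h (Finset.Subset.refl _)
      · right; left; exact Finset.inter_subset_inter h (Finset.Subset.refl _)
      · right; right
        apply Finset.eq_empty_of_forall_notMem
        intro t ht
        simp only [Finset.mem_inter] at ht
        have : t ∈ S x ∩ S y := Finset.mem_inter.2 ⟨ht.1.1, ht.2.1⟩
        rw [h] at this; simp at this
  have hGR0 : Good j b R0 := by
    refine ⟨?_, ?_, ?_⟩
    · intro x hx1 hx2
      have hm := hG.1 x (by omega) hx2
      simp only [hR0, if_pos (show j < x ∧ x < b from ⟨hx1, hx2⟩)]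
      refine ⟨Finset.mem_inter.2 ⟨hm.1, by simp [Finset.mem_Ico]; omega⟩,
        Finset.mem_inter.2 ⟨hm.2.1, by simp [Finset.mem_Ico]; omega⟩,
        Finset.inter_subset_right⟩
    · intro x hx; simp only [hR0, if_neg hx]
    · intro x y hx1 hx2 hy1 hy2
      simp only [hR0, if_pos (show j < x ∧ x < b from ⟨hx1, hx2⟩), if_pos (show j < y ∧ y < b from ⟨hy1, hy2⟩)]
      rcases hG.2.2 x y (by omega) hx2 (by omega) hy2 with h | h | h
      · left; exact Finset.inter_subset_inter h (Finset.Subset.refl _)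
      · right; left; exact Finset.inter_subset_inter h (Finset.Subset.refl _)
      · right; right
        apply Finset.eq_empty_of_forall_notMem
        intro t ht
        simp only [Finset.mem_inter] at ht
        have : t ∈ S x ∩ S y := Finset.mem_inter.2 ⟨ht.1.1, ht.2.1⟩
        rw [h] at this; simp at this
  have hcomb0 : combine a j b L0 R0 = S := by
    apply hmin
    · exact combine_good hGL0 hGR0 hj1 hj2
    · intro x
      rcases eq_or_ne x j with rfl | hne
      · rw [combine_root, hroot]
      · rcases lt_or_gt_of_ne hne with h | h
        · rw [combine_lt h]
          by_cases hx : a < x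
          · simp only [hL0, if_pos (show a < x ∧ x < j from ⟨hx, h⟩)]; exact Finset.inter_subset_left
          · simp only [hL0, if_neg (by omega : ¬(a < x ∧ x < j))]
            exact Finset.empty_subset _
        · rw [combine_gt h]
          by_cases hx : x < b
          · simp only [hR0, if_pos (show j < x ∧ x < b from ⟨h, hx⟩)]; exact Finset.inter_subset_left
          · simp only [hR0, if_neg (by omega : ¬(j < x ∧ x < b))]
            exact Finset.empty_subset _
  have hhalfL : ∀ x, a < x → x < j → S x ⊆ Finset.Ico a j := by
    intro x hx1 hx2
    have : combine a j b L0 R0 x = S x := by rw [hcomb0]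
    rw [combine_lt hx2] at this
    simp only [hL0, if_pos (show a < x ∧ x < j from ⟨hx1, hx2⟩)] at this
    rw [← this]; exact Finset.inter_subset_right
  have hhalfR : ∀ x, j < x → x < b → S x ⊆ Finset.Ico j b := by
    intro x hx1 hx2
    have : combine a j b L0 R0 x = S x := by rw [hcomb0]
    rw [combine_gt hx1] at this
    simp only [hR0, if_pos (show j < x ∧ x < b from ⟨hx1, hx2⟩)] at this
    rw [← this]; exact Finset.inter_subset_right
  have hGL : Good a j (gate a j S) := gate_good hG (by omega) hhalfL
  have hGR : Good j b (gate j b S) := gate_good_right hG (by omega) hhalfR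
  have hcomb : S = combine a j b (gate a j S) (gate j b S) := by
    funext x
    rcases eq_or_ne x j with rfl | hne
    · rw [combine_root, hroot]
    · rcases lt_or_gt_of_ne hne with h | h
      · rw [combine_lt h]
        by_cases hx : a < x
        · rw [gate_pos hx h]
        · rw [gate_neg (by omega : ¬(a < x ∧ x < j))]
          exact hG.2.1 x (by omega)
      · rw [combine_gt h]
        by_cases hx : x < b
        · rw [gate_pos h hx]
        · rw [gate_neg (by omega : ¬(j < x ∧ x < b))]
          exact hG.2.1 x (by omega)
  refine ⟨j, hj1, hj2, hcomb, ⟨hGL, ?_⟩, ⟨hGR, ?_⟩⟩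
  · intro L' hGL' hle
    have hS' : combine a j b L' (gate j b S) = S := by
      apply hmin
      · exact combine_good hGL' hGR hj1 hj2
      · intro x
        rcases eq_or_ne x j with rfl | hne
        · rw [combine_root, hroot]
        · rcases lt_or_gt_of_ne hne with h | h
          · rw [combine_lt h]
            refine (hle x).trans ?_
            by_cases hx : a < x
            · rw [gate_pos hx h]
            · rw [gate_neg (by omega : ¬(a < x ∧ x < j))]
              exact Finset.empty_subset _
          · rw [combine_gt h]
            by_cases hx : x < b
            · rw [gate_pos h hx]
            · rw [gate_neg (by omega : ¬(j < x ∧ x < b))]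
              rw [hG.2.1 x (by omega)]
    funext x
    by_cases h : a < x ∧ x < j
    · have : combine a j b L' (gate j b S) x = S x := by rw [hS']
      rw [combine_lt h.2] at this
      rw [this]
      rw [gate_pos h.1 h.2]
    · rw [hGL'.2.1 x h]
      rw [gate_neg h]
  · intro R' hGR' hle
    have hS' : combine a j b (gate a j S) R' = S := by
      apply hmin
      · exact combine_good hGL hGR' hj1 hj2
      · intro x
        rcases eq_or_ne x j with rfl | hne
        · rw [combine_root, hroot]
        · rcases lt_or_gt_of_ne hne with h | h
          · rw [combine_lt h]
            by_cases hx : a < x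
            · rw [gate_pos hx h]
            · rw [gate_neg (by omega : ¬(a < x ∧ x < j))]
              rw [hG.2.1 x (by omega)]
          · rw [combine_gt h]
            refine (hle x).trans ?_
            by_cases hx : x < b
            · rw [gate_pos h hx]
            · rw [gate_neg (by omega : ¬(j < x ∧ x < b))]
              exact Finset.empty_subset _
    funext x
    by_cases h : j < x ∧ x < b
    · have : combine a j b (gate a j S) R' x = S x := by rw [hS']
      rw [combine_gt h.1] at this
      rw [this]
      rw [gate_pos h.1 h.2]
    · rw [hGR'.2.1 x h]
      rw [gate_neg h]

lemma finite_minGood (a b : ℕ) : Finite {S : ℕ → Finset ℕ // MinGood a b S} := by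
  set D : Finset (ℕ × ℕ) := Finset.Ioo a b ×ˢ Finset.Ico a b with hD
  let f : {S : ℕ → Finset ℕ // MinGood a b S} → {t : Finset (ℕ × ℕ) // t ∈ D.powerset} :=
    fun S => ⟨D.filter (fun p => p.2 ∈ S.1 p.1), Finset.mem_powerset.2 (Finset.filter_subset _ _)⟩
  have hf : Function.Injective f := by
    intro S T h
    have h' : D.filter (fun p => p.2 ∈ S.1 p.1) = D.filter (fun p => p.2 ∈ T.1 p.1) :=
      congrArg Subtype.val h
    apply Subtype.ext
    funext x
    by_cases hx : a < x ∧ x < b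
    · ext n
      have hmem : ∀ (U : ℕ → Finset ℕ), Good a b U →
          (n ∈ U x ↔ (x, n) ∈ D.filter (fun p => p.2 ∈ U p.1)) := by
        intro U hU
        simp only [hD, Finset.mem_filter, Finset.mem_product, Finset.mem_Ioo, Finset.mem_Ico]
        constructor
        · intro hn
          have hb2 := (hU.1 x hx.1 hx.2).2.2 hn
          simp only [Finset.mem_Ico] at hb2
          exact ⟨⟨hx, hb2⟩, hn⟩
        · intro hn; exact hn.2
      rw [hmem _ S.2.1, hmem _ T.2.1, h']
    · rw [S.2.1.2.1 x hx, T.2.1.2.1 x hx]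
  exact Finite.of_injective f hf

lemma nat_card_sigma {ι : Type*} [Fintype ι] (f : ι → Type*) [∀ i, Finite (f i)] :
    Nat.card (Σ i, f i) = ∑ i, Nat.card (f i) := by
  letI : ∀ i, Fintype (f i) := fun i => Fintype.ofFinite _
  rw [Nat.card_eq_fintype_card, Fintype.card_sigma]
  exact Finset.sum_congr rfl (fun i _ => (Nat.card_eq_fintype_card).symm)

lemma minGood_base {a : ℕ} {S : ℕ → Finset ℕ} :
    MinGood a (a + 1) S ↔ S = (fun _ => ∅) := by
  have hempty : ∀ U : ℕ → Finset ℕ, Good a (a + 1) U → U = (fun _ => ∅) := by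
    intro U hU
    funext x
    exact hU.2.1 x (by omega)
  constructor
  · intro h; exact hempty S h.1
  · rintro rfl
    refine ⟨⟨?_, ?_, ?_⟩, ?_⟩
    · intro x hx1 hx2; omega
    · intro x _; rfl
    · intro x y hx1 hx2; omega
    · intro S' hG' _; exact hempty S' hG'
  
lemma card_minGood : ∀ m : ℕ, 1 ≤ m → ∀ a : ℕ,
    Nat.card {S : ℕ → Finset ℕ // MinGood a (a + m) S} = catalan (m - 1) := by
  intro m
  induction m using Nat.strong_induction_on with
  | _ m ih =>
    intro hm a
    rcases eq_or_lt_of_le hm with h1 | h2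
    · -- m = 1
      have hm1 : m = 1 := h1.symm
      subst hm1
      haveI : Unique {S : ℕ → Finset ℕ // MinGood a (a + 1) S} := by
        refine ⟨⟨⟨(fun _ => ∅), minGood_base.2 rfl⟩⟩, ?_⟩
        intro S
        exact Subtype.ext (minGood_base.1 S.2)
      simp [Nat.card_unique, catalan_zero]
    · -- 2 ≤ m
      have hb : a + 2 ≤ a + m := by omega
      haveI : ∀ j : ℕ, Finite ({L : ℕ → Finset ℕ // MinGood a j L} ×
          {R : ℕ → Finset ℕ // MinGood j (a + m) R}) := by
        intro j
        haveI := finite_minGood a j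
        haveI := finite_minGood j (a + m)
        infer_instance
      let T := (j : {j // j ∈ Finset.Ioo a (a + m)}) ×
        ({L : ℕ → Finset ℕ // MinGood a j.1 L} × {R : ℕ → Finset ℕ // MinGood j.1 (a + m) R})
      let f : T → {S : ℕ → Finset ℕ // MinGood a (a + m) S} := fun t =>
        ⟨combine a t.1.1 (a + m) t.2.1.1 t.2.2.1,
          combine_minGood t.2.1.2 t.2.2.2
            (Finset.mem_Ioo.1 t.1.2).1 (Finset.mem_Ioo.1 t.1.2).2⟩
      have hinj : Function.Injective f := by
        rintro ⟨⟨j, hj⟩, ⟨L, hL⟩, ⟨R, hR⟩⟩ ⟨⟨j', hj'⟩, ⟨L', hL'⟩, ⟨R', hR'⟩⟩ heq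
        simp only [Finset.mem_Ioo] at hj hj'
        have hcomb : combine a j (a + m) L R = combine a j' (a + m) L' R' :=
          congrArg Subtype.val heq
        have hkey : ∀ u v : ℕ, a < u → u < a + m → a < v → v < a + m →
            ∀ Lu Ru Lv Rv : ℕ → Finset ℕ, MinGood a u Lu →
            combine a u (a + m) Lu Ru = combine a v (a + m) Lv Rv → ¬ v < u := by
          intro u v hu1 hu2 hv1 hv2 Lu Ru Lv Rv hLu hc hlt
          have h1 : combine a u (a + m) Lu Ru v = Finset.Ico a (a + m) := by
            rw [hc, combine_root]
          rw [combine_lt hlt] at h1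
          have h2 := (hLu.1.1 v hv1 hlt).2.2
          rw [h1] at h2
          have : a + m - 1 ∈ Finset.Ico a (a + m) := by simp [Finset.mem_Ico]; omega
          have := h2 this
          simp only [Finset.mem_Ico] at this; omega
        have hjj : j = j' := by
          rcases lt_trichotomy j j' with h | h | h
          · exact absurd h (hkey j' j hj'.1 hj'.2 hj.1 hj.2 L' R' L R hL' hcomb.symm)
          · exact h
          · exact absurd h (hkey j j' hj.1 hj.2 hj'.1 hj'.2 L R L' R' hL hcomb)
        subst hjj
        have hLa : MinGood a j L := hL
        have hLa' : MinGood a j L' := hL'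
        have hRa : MinGood j (a + m) R := hR
        have hRa' : MinGood j (a + m) R' := hR'
        have hLL : L = L' := by
          funext x
          by_cases h : x < j
          · have := congrFun hcomb x
            rwa [combine_lt h, combine_lt h] at this
          · rw [hLa.1.2.1 x (by omega), hLa'.1.2.1 x (by omega)]
        have hRR : R = R' := by
          funext x
          by_cases h : j < x
          · have := congrFun hcomb x
            rwa [combine_gt h, combine_gt h] at this
          · rw [hRa.1.2.1 x (by omega), hRa'.1.2.1 x (by omega)]
        subst hLL; subst hRR; rfl
      have hsurj : Function.Surjective f := by
        rintro ⟨S, hS⟩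
        obtain ⟨j, hj1, hj2, hcomb, hL, hR⟩ := split_of_min hS hb
        refine ⟨⟨⟨j, Finset.mem_Ioo.2 ⟨hj1, hj2⟩⟩, ⟨gate a j S, hL⟩, ⟨gate j (a + m) S, hR⟩⟩, ?_⟩
        exact Subtype.ext hcomb.symm
      have hcard : Nat.card {S : ℕ → Finset ℕ // MinGood a (a + m) S} = Nat.card T :=
        (Nat.card_eq_of_bijective f ⟨hinj, hsurj⟩).symm
      rw [hcard]
      have : Nat.card T = ∑ j : {j // j ∈ Finset.Ioo a (a + m)},
          Nat.card ({L : ℕ → Finset ℕ // MinGood a j.1 L} ×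
            {R : ℕ → Finset ℕ // MinGood j.1 (a + m) R}) := by
        exact nat_card_sigma _
      rw [this]
      have hterm : ∀ j : {j // j ∈ Finset.Ioo a (a + m)},
          Nat.card ({L : ℕ → Finset ℕ // MinGood a j.1 L} ×
            {R : ℕ → Finset ℕ // MinGood j.1 (a + m) R})
          = catalan (j.1 - a - 1) * catalan (a + m - j.1 - 1) := by
        rintro ⟨j, hj⟩
        simp only [Finset.mem_Ioo] at hj
        rw [Nat.card_prod]
        have e1 := ih (j - a) (by omega) (by omega) a
        rw [show a + (j - a) = j from by omega] at e1
        have e2 := ih (a + m - j) (by omega) (by omega) j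
        rw [show j + (a + m - j) = a + m from by omega] at e2
        rw [e1, e2]
      rw [Finset.sum_congr rfl (fun j _ => hterm j)]
      rw [Finset.sum_coe_sort (Finset.Ioo a (a + m))
        (fun j => catalan (j - a - 1) * catalan (a + m - j - 1))]
      rw [← Finset.Ico_add_one_left_eq_Ioo, Finset.sum_Ico_eq_sum_range]
      have hlen : a + m - (a + 1) = m - 1 := by omega
      rw [hlen]
      have : ∀ i ∈ Finset.range (m - 1),
          catalan (a + 1 + i - a - 1) * catalan (a + m - (a + 1 + i) - 1)
          = catalan i * catalan (m - 2 - i) := by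
        intro i hi
        simp only [Finset.mem_range] at hi
        rw [show a + 1 + i - a - 1 = i from by omega,
          show a + m - (a + 1 + i) - 1 = m - 2 - i from by omega]
      rw [Finset.sum_congr rfl this]
      rw [show m - 1 = (m - 2) + 1 from by omega, catalan_succ]
      rw [Fin.sum_univ_eq_sum_range (fun i => catalan i * catalan (m - 2 - i)) (m - 2 + 1)]

end ChainAux


namespace PDB

noncomputable section

/-! ### Monotone DNF formulas over a finite variable set -/

/-- Probability that a monotone DNF formula (given by its finite set of implicants, each a
finite set of positive variables) is true, when each variable `x` is independently true with
probability `p x`. -/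
def dnfProb {X : Type*} [Fintype X] (p : X → ℝ) (F : Finset (Finset X)) : ℝ :=
  ∑ ω : X → Bool,
    (∏ x : X, if ω x = true then p x else 1 - p x) *
      (if ∃ T ∈ F, ∀ x ∈ T, ω x = true then 1 else 0)

/-- A prime implicant of a monotone DNF formula: a minimal implicant. -/
def IsPrimeImplicant {X : Type*} (F : Finset (Finset X)) (T : Finset X) : Prop :=
  T ∈ F ∧ ∀ S ∈ F, S ⊆ T → S = T

variable {A V dom : Type*}

/-! ### Self-join-free conjunctive queries: hierarchy and connectivity.
A self-join-free conjunctive query is given by its atoms: a family `atoms : A → Finset V`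
assigning to each of the (pairwise distinct) relation symbols its finite set of variables;
`H` denotes the set of head variables (treated as constants); all other variables are
existential.  A Boolean query has `H = ∅`. -/

/-- `at(x)`: the atoms among `S` that contain the variable `x`. -/
def atOf (atoms : A → Finset V) (S : Finset A) (x : V) : Finset A :=
  S.filter (fun i => x ∈ atoms i)

/-- The query consisting of the atoms `S` is hierarchical, with the variables in `H`
treated as constants (head variables): for any two existential variables, their atom sets
are comparable or disjoint. -/
def HierOn (atoms : A → Finset V) (S : Finset A) (H : Finset V) : Prop :=
  ∀ x : V, x ∉ H → ∀ y : V, y ∉ H →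
    atOf atoms S x ⊆ atOf atoms S y ∨ atOf atoms S x ∩ atOf atoms S y = ∅ ∨
      atOf atoms S y ⊆ atOf atoms S x

/-- A Boolean query (with all its atoms) is hierarchical. -/
def Hier [Fintype A] (atoms : A → Finset V) : Prop :=
  HierOn atoms Finset.univ ∅

/-- The set of atoms `S` is disconnected: it can be partitioned into two nonempty sets
sharing no variables. -/
def Disconn (atoms : A → Finset V) (S : Finset A) : Prop :=
  ∃ T : Finset A, T ⊆ S ∧ T.Nonempty ∧ (S \ T).Nonempty ∧
    ∀ i ∈ T, ∀ j ∈ S \ T, atoms i ∩ atoms j = ∅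

/-- `T` is a connected component of the set of atoms `S`: a maximal connected subset. -/
def IsComp (atoms : A → Finset V) (S T : Finset A) : Prop :=
  T ⊆ S ∧ T.Nonempty ∧ ¬ Disconn atoms T ∧
    ∀ U : Finset A, T ⊆ U → U ⊆ S → ¬ Disconn atoms U → U = T

/-- `xs` is a cut-set of the query with atoms `S`: a set of its variables whose removal
disconnects the query. -/
def IsCutSet (atoms : A → Finset V) (S : Finset A) (xs : Finset V) : Prop :=
  xs ⊆ S.sup atoms ∧ Disconn (fun i => atoms i \ xs) S

/-- a minimal cut-set (min-cut-set) -/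
def MinCut (atoms : A → Finset V) (S : Finset A) (xs : Finset V) : Prop :=
  IsCutSet atoms S xs ∧ ∀ ys : Finset V, ys ⊂ xs → ¬ IsCutSet atoms S ys

/-- the separator variables of a Boolean query: the variables occurring in every atom -/
def SepVars [Fintype A] [Fintype V] (atoms : A → Finset V) : Finset V :=
  Finset.univ.filter (fun x => ∀ i : A, x ∈ atoms i)

/-- the set of variables of a query -/
def varsOf [Fintype A] (atoms : A → Finset V) : Finset V :=
  Finset.univ.sup atoms

/-! ### Dissociations -/

/-- `Δ` is a dissociation of the query with atoms `atoms` and head variables `H`: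
each atom receives extra existential variables of the query that it does not already
contain. -/
def IsDiss [Fintype A] (atoms : A → Finset V) (H : Finset V) (Δ : A → Finset V) : Prop :=
  ∀ i : A, Δ i ⊆ (varsOf atoms \ H) \ atoms i

/-- the atoms of the dissociated query `q^Δ` -/
def dissAtoms (atoms Δ : A → Finset V) : A → Finset V := fun i => atoms i ∪ Δ i

/-- the partial dissociation order `Δ ≼ Δ'` -/
def dissLE (Δ Δ' : A → Finset V) : Prop := ∀ i : A, Δ i ⊆ Δ' i

/-- a safe dissociation: the dissociated query is hierarchical -/
def SafeDiss [Fintype A] (atoms : A → Finset V) (H : Finset V) (Δ : A → Finset V) : Prop :=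
  IsDiss atoms H Δ ∧ HierOn (dissAtoms atoms Δ) Finset.univ H

/-- a minimal safe dissociation: no smaller dissociation (in the order `≼`) is safe -/
def MinSafeDiss [Fintype A] (atoms : A → Finset V) (H : Finset V) (Δ : A → Finset V) : Prop :=
  SafeDiss atoms H Δ ∧
    ∀ Δ' : A → Finset V, SafeDiss atoms H Δ' → dissLE Δ' Δ → Δ' = Δ

/-! ### Tuple-independent probabilistic databases -/

/-- A tuple-independent probabilistic database for the query with atoms `atoms` over the
finite domain `dom`: each relation `i` is a finite set of tuples (functions from the
variables of the atom to the domain), each carrying a probability. -/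
structure DB (atoms : A → Finset V) (dom : Type*) where
  tuples : ∀ i : A, Finset ({x // x ∈ atoms i} → dom)
  prob : ∀ i : A, ({x // x ∈ atoms i} → dom) → ℝ

/-- all tuple probabilities lie in [0,1] -/
def DB.Valid {atoms : A → Finset V} (D : DB atoms dom) : Prop :=
  ∀ i : A, ∀ t ∈ D.tuples i, 0 ≤ D.prob i t ∧ D.prob i t ≤ 1

/-- the restriction of a valuation of all variables to the tuple format of atom `i` -/
def restrict (atoms : A → Finset V) (i : A) (ν : V → dom) : {x // x ∈ atoms i} → dom :=
  fun x => ν x.1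

/-- restriction of a tuple to a smaller variable set -/
def restrictTup {xs ys : Finset V} (h : xs ⊆ ys) (t : {x // x ∈ ys} → dom) :
    {x // x ∈ xs} → dom :=
  fun x => t ⟨x.1, h x.2⟩

/-- `P(q)`: the probability that the Boolean query with atoms `atoms` is true in a possible
world chosen by independently including each tuple `t` of `D` with probability `p(t)`. -/
def queryProb [Fintype A] (atoms : A → Finset V) (D : DB atoms dom) : ℝ :=
  ∑ W : ∀ i : A, {t // t ∈ D.tuples i} → Bool,
    (∏ i : A, ∏ t : {t // t ∈ D.tuples i},
        if W i t = true then D.prob i t.1 else 1 - D.prob i t.1) *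
      (if ∃ ν : V → dom, ∀ i : A,
            ∃ h : restrict atoms i ν ∈ D.tuples i, W i ⟨restrict atoms i ν, h⟩ = true
        then 1 else 0)

/-- The dissociated database `D^Δ`: relation `R_i^{ȳ_i}` contains one copy of each tuple
`t ∈ R_i` for every assignment of the added variables `ȳ_i` to domain values, with the same
probability as `t`. -/
def dissDB [Fintype dom] (atoms Δ : A → Finset V) (D : DB atoms dom) :
    DB (dissAtoms atoms Δ) dom where
  tuples i := Finset.univ.filter
    (fun t : {x // x ∈ dissAtoms atoms Δ i} → dom =>
      restrictTup (show atoms i ⊆ dissAtoms atoms Δ i from Finset.subset_union_left) t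
        ∈ D.tuples i)
  prob i t :=
    D.prob i
      (restrictTup (show atoms i ⊆ dissAtoms atoms Δ i from Finset.subset_union_left) t)

/-- `P(q^Δ)`: the probability of the dissociated query on the dissociated database. -/
def dissProb [Fintype A] [Fintype dom] (atoms Δ : A → Finset V) (D : DB atoms dom) : ℝ :=
  queryProb (dissAtoms atoms Δ) (dissDB atoms Δ D)

/-- The propagation score `ρ(q)`: the minimum of `P(q^Δ)` over all safe dissociations. -/
def propScore [Fintype A] [Fintype dom] (atoms : A → Finset V)
    (D : DB atoms dom) : ℝ :=
  sInf { r : ℝ | ∃ Δ : A → Finset V, SafeDiss atoms ∅ Δ ∧ r = dissProb atoms Δ D }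

/-- the database with all tuple probabilities scaled by the factor `f` -/
def scaleDB {atoms : A → Finset V} (D : DB atoms dom) (f : ℝ) : DB atoms dom where
  tuples := D.tuples
  prob i t := f * D.prob i t

/-- relation `i` is deterministic: all its tuples have probability 1 (otherwise it is
probabilistic) -/
def Deterministic {atoms : A → Finset V} (D : DB atoms dom) (i : A) : Prop :=
  ∀ t ∈ D.tuples i, D.prob i t = 1

/-- The lineage `F_{q,D}` of the Boolean query on `D`: the monotone DNF over the tuples of
`D` whose implicants correspond to the satisfying assignments of the query. -/
def lineage [Fintype A] [Fintype V] [Fintype dom] (atoms : A → Finset V)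
    (D : DB atoms dom) :
    Finset (Finset (Σ i : A, {x // x ∈ atoms i} → dom)) :=
  ((Finset.univ : Finset (V → dom)).filter
      (fun ν => ∀ i : A, restrict atoms i ν ∈ D.tuples i)).image
    (fun ν => Finset.univ.image
      (fun i : A => (⟨i, restrict atoms i ν⟩ : Σ i : A, {x // x ∈ atoms i} → dom)))

/-- The substitution `θ : D^Δ → D` mapping every tuple of a dissociated relation
`R_i^{ȳ_i}` to its projection onto the original variables of `R_i`. -/
def dissTupleMap (atoms Δ : A → Finset V) :
    (Σ i : A, {x // x ∈ dissAtoms atoms Δ i} → dom) →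
      Σ i : A, {x // x ∈ atoms i} → dom :=
  fun t =>
    ⟨t.1, restrictTup (show atoms t.1 ⊆ dissAtoms atoms Δ t.1 from Finset.subset_union_left)
      t.2⟩

/-! ### Functional dependencies -/

/-- `Determines Γ xs y`: the variable `y` is in the closure `xs⁺` of `xs` under the
functional dependencies `Γ`. -/
inductive Determines (Γ : Set (Finset V × V)) : Finset V → V → Prop
  | mem (xs : Finset V) (y : V) (h : y ∈ xs) : Determines Γ xs y
  | step (xs : Finset V) (fd : Finset V × V) (hfd : fd ∈ Γ)
      (hall : ∀ z ∈ fd.1, Determines Γ xs z) : Determines Γ xs fd.2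

/-- The functional dependency `fd` is an FD on the attributes of relation `j` that holds
in the database `D`. -/
def FDHolds (atoms : A → Finset V) (D : DB atoms dom) (j : A) (fd : Finset V × V) : Prop :=
  ∃ h1 : fd.1 ⊆ atoms j, ∃ h2 : fd.2 ∈ atoms j,
    ∀ t ∈ D.tuples j, ∀ t' ∈ D.tuples j,
      (∀ v : V, ∀ hv : v ∈ fd.1, t ⟨v, h1 hv⟩ = t' ⟨v, h1 hv⟩) →
        t ⟨fd.2, h2⟩ = t' ⟨fd.2, h2⟩

/-! ### Query plans -/

/-- Query plans: atoms, duplicate-eliminating projections (given by the retained head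
variables), and k-ary natural joins. -/
inductive Plan (A V : Type*) where
  | atom : A → Plan A V
  | proj : Finset V → Plan A V → Plan A V
  | join : List (Plan A V) → Plan A V

namespace Plan

/-- the head variables of a plan -/
def hvar (atoms : A → Finset V) : Plan A V → Finset V
  | .atom i => atoms i
  | .proj hv _ => hv
  | .join Ps => Ps.attach.foldr (fun P acc => hvar atoms P.1 ∪ acc) ∅
decreasing_by
  all_goals simp_wf
  all_goals try have := List.sizeOf_lt_of_mem P.2
  all_goals omega

/-- the multiset of atoms used by a plan -/
def atomsOf : Plan A V → Multiset A
  | .atom i => {i}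
  | .proj _ P => atomsOf P
  | .join Ps => Ps.attach.foldr (fun P acc => atomsOf P.1 + acc) 0
decreasing_by
  all_goals simp_wf
  all_goals try have := List.sizeOf_lt_of_mem P.2
  all_goals omega

def isProj : Plan A V → Prop
  | .proj _ _ => True
  | _ => False

def isJoin : Plan A V → Prop
  | .join _ => True
  | _ => False

/-- structural well-formedness: projections only retain available variables, joins are at
least binary, and joins and projections alternate -/
def WF (atoms : A → Finset V) : Plan A V → Prop
  | .atom _ => True
  | .proj hv P => hv ⊆ hvar atoms P ∧ ¬ isProj P ∧ WF atoms P
  | .join Ps => 2 ≤ Ps.length ∧ ∀ P ∈ Ps, ¬ isJoin P ∧ WF atoms P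
decreasing_by
  all_goals simp_wf
  all_goals try rename_i h; try have := List.sizeOf_lt_of_mem h
  all_goals omega

/-- a safe plan: at every join, all subplans have the same head variables -/
def Safe (atoms : A → Finset V) : Plan A V → Prop
  | .atom _ => True
  | .proj _ P => Safe atoms P
  | .join Ps => (∀ P ∈ Ps, Safe atoms P) ∧
      ∀ P ∈ Ps, ∀ Q ∈ Ps, hvar atoms P = hvar atoms Q
decreasing_by
  all_goals simp_wf
  all_goals try rename_i h; try have := List.sizeOf_lt_of_mem h
  all_goals omega

/-- `P` is a (well-formed) query plan for the query with atoms `atoms` and head variables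
`H`: it uses every atom exactly once and its output head variables are exactly `H`
(for a Boolean query, `H = ∅`, i.e. all existential variables are projected away). -/
def IsPlanFor [Fintype A] (atoms : A → Finset V) (H : Finset V) (P : Plan A V) : Prop :=
  WF atoms P ∧ atomsOf P = (Finset.univ : Finset A).val ∧ hvar atoms P = H

/-- the join variables: the union of the head variables of a list of subplans -/
def joinVars (atoms : A → Finset V) (Ps : List (Plan A V)) : Finset V :=
  (Ps.map (hvar atoms)).foldr (· ∪ ·) ∅

/-- Identification of plans up to join order, flattening of nested joins, and removal of
trivial (identity) projections. -/
inductive Equiv (atoms : A → Finset V) : Plan A V → Plan A V → Prop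
  | refl (P) : Equiv atoms P P
  | symm {P Q} : Equiv atoms P Q → Equiv atoms Q P
  | trans {P Q R} : Equiv atoms P Q → Equiv atoms Q R → Equiv atoms P R
  | projCongr (hv) {P Q} : Equiv atoms P Q → Equiv atoms (.proj hv P) (.proj hv Q)
  | joinCongr {Ps Qs} : List.Forall₂ (Equiv atoms) Ps Qs →
      Equiv atoms (.join Ps) (.join Qs)
  | joinPerm {Ps Qs} : Ps.Perm Qs → Equiv atoms (.join Ps) (.join Qs)
  | joinFlatten (Ps Qs Rs) :
      Equiv atoms (.join (Ps ++ .join Qs :: Rs)) (.join (Ps ++ Qs ++ Rs))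
  | projTriv {P} (hv) (h : hv = hvar atoms P) : Equiv atoms (.proj hv P) P

/-- The extensional score semantics of a plan evaluated on the database `D`: output tuples
are represented by total valuations `ν : V → dom` (only the values on the head variables
matter; duplicates are represented canonically by the default value `d₀` outside the head
variables).  Joins multiply scores, and duplicate-eliminating projections combine the
scores `s_1, …, s_n` of the tuples projecting to a common output tuple to
`1 - ∏ (1 - s_i)`. -/
def score [Fintype V] [Fintype dom] (atoms : A → Finset V) (D : DB atoms dom) (d₀ : dom) :
    Plan A V → (V → dom) → ℝ
  | .atom i, ν =>
      if restrict atoms i ν ∈ D.tuples i then D.prob i (restrict atoms i ν) else 0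
  | .proj hv P, ν =>
      1 - ∏ μ ∈ Finset.univ.filter (fun μ : V → dom =>
            (∀ v : V, v ∉ hvar atoms P → μ v = d₀) ∧ ∀ v ∈ hv, μ v = ν v),
          (1 - score atoms D d₀ P μ)
  | .join Ps, ν => (Ps.attach.map (fun P => score atoms D d₀ P.1 ν)).prod
decreasing_by
  all_goals simp_wf
  all_goals try have := List.sizeOf_lt_of_mem P.2
  all_goals omega

/-- the score of a Boolean plan -/
def bscore [Fintype V] [Fintype dom] [Inhabited dom] (atoms : A → Finset V)
    (D : DB atoms dom) (P : Plan A V) : ℝ :=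
  score atoms D default P (fun _ => default)

/-- Dropping the dissociated variables from a plan (for a dissociated query) to obtain the
corresponding plan `P^Δ` for the original query: every projection list is restricted to
the variables actually available in the original query. -/
def eraseTo (atoms : A → Finset V) : Plan A V → Plan A V
  | .atom i => .atom i
  | .proj hv P => .proj (hv ∩ hvar atoms (eraseTo atoms P)) (eraseTo atoms P)
  | .join Ps => .join (Ps.attach.map (fun P => eraseTo atoms P.1))
decreasing_by
  all_goals simp_wf
  all_goals try have := List.sizeOf_lt_of_mem P.2
  all_goals omega

/-- The dissociation `Δ^P` corresponding to a plan `P`: for each join operator with join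
variables `JVar = ⋃_j HVar(P_j)`, every relation occurring in subplan `P_j` receives the
variables `JVar ∖ HVar(P_j)`. -/
def dissOf (atoms : A → Finset V) : Plan A V → A → Finset V
  | .atom _ => fun _ => ∅
  | .proj _ P => dissOf atoms P
  | .join Ps => fun i =>
      Ps.attach.foldr (fun P acc =>
        (if i ∈ atomsOf P.1 then
            (joinVars atoms Ps \ hvar atoms P.1) ∪ dissOf atoms P.1 i
          else ∅) ∪ acc) ∅
decreasing_by
  all_goals simp_wf
  all_goals try have := List.sizeOf_lt_of_mem P.2
  all_goals omega

end Plan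

/-- The recursive algorithm `MP` enumerating the minimal query plans of the query with
atom set `S` and head variables `H` (head variables are treated as constants):
* if the query has a single atom, return the projection of that atom onto the head
  variables;
* if the query (after removing the head variables) is disconnected, return any join of
  minimal plans of its connected components (each component keeping the head variables
  occurring in it);
* otherwise, for any minimal cut-set `ys` of the query minus its head variables, return
  the plan projecting `ys` away from any minimal plan of the query with head variables
  `H ∪ ys`. -/
inductive MPrel (atoms : A → Finset V) : Finset A → Finset V → Plan A V → Prop
  | single (i : A) (H : Finset V) : MPrel atoms {i} H (.proj H (.atom i))
  | disc (S : Finset A) (H : Finset V) (parts : List (Finset A)) (Ps : List (Plan A V))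
      (hdup : parts.Nodup) (hlen : 2 ≤ parts.length)
      (hparts : ∀ T : Finset A, T ∈ parts ↔ IsComp (fun i => atoms i \ H) S T)
      (hlen2 : parts.length = Ps.length)
      (hPs : ∀ n : ℕ, ∀ h1 : n < parts.length, ∀ h2 : n < Ps.length,
        MPrel atoms parts[n] (H ∩ (parts[n]).sup atoms) Ps[n]) :
      MPrel atoms S H (.join Ps)
  | conn (S : Finset A) (H : Finset V) (ys : Finset V) (P : Plan A V)
      (hcard : 2 ≤ S.card)
      (hconn : ¬ Disconn (fun i => atoms i \ H) S)
      (hcut : MinCut (fun i => atoms i \ H) S ys)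
      (hP : MPrel atoms S (H ∪ ys) P) :
      MPrel atoms S H (.proj H P)



/-! ### Transport: chain queries -/

section ChainTransport

open ChainAux

variable (k : ℕ)

/-- atoms of the `k`-chain query -/
def chainAtoms : Fin k → Finset (Fin (k + 1)) := fun i => {i.castSucc, i.succ}

/-- head variables of the `k`-chain query -/
def chainH : Finset (Fin (k + 1)) := {0, Fin.last k}

lemma mem_chainAtoms {k : ℕ} {v : Fin (k + 1)} {i : Fin k} :
    v ∈ chainAtoms k i ↔ v.val = i.val ∨ v.val = i.val + 1 := by
  simp only [chainAtoms, Finset.mem_insert, Finset.mem_singleton, Fin.ext_iff,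
    Fin.coe_castSucc, Fin.val_succ]

lemma mem_chainH {k : ℕ} {v : Fin (k + 1)} :
    v ∈ chainH k ↔ v.val = 0 ∨ v.val = k := by
  simp only [chainH, Finset.mem_insert, Finset.mem_singleton, Fin.ext_iff,
    Fin.val_zero, Fin.val_last]

lemma not_mem_chainH {k : ℕ} {v : Fin (k + 1)} :
    v ∉ chainH k ↔ (0 < v.val ∧ v.val < k) := by
  rw [mem_chainH]
  have := v.isLt
  omega

lemma chain_varsOf (hk : 1 ≤ k) : varsOf (chainAtoms k) = Finset.univ := by
  apply Finset.eq_univ_of_forall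
  intro v
  simp only [varsOf, Finset.mem_sup]
  by_cases hv : v.val < k
  · exact ⟨⟨v.val, hv⟩, Finset.mem_univ _, mem_chainAtoms.2 (Or.inl rfl)⟩
  · have hv' : v.val = k := by have := v.isLt; omega
    refine ⟨⟨k - 1, by omega⟩, Finset.mem_univ _, mem_chainAtoms.2 (Or.inr ?_)⟩
    simp only [hv']; omega

lemma mem_dissAtoms {k : ℕ} {Δ : Fin k → Finset (Fin (k + 1))} {i : Fin k} {v : Fin (k + 1)} :
    v ∈ dissAtoms (chainAtoms k) Δ i ↔ (v ∈ chainAtoms k i ∨ v ∈ Δ i) := by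
  simp only [dissAtoms, Finset.mem_union]

/-- the at-set family associated with a dissociation -/
def toS (Δ : Fin k → Finset (Fin (k + 1))) : ℕ → Finset ℕ := fun x =>
  if hx : 0 < x ∧ x < k then
    (atOf (dissAtoms (chainAtoms k) Δ) Finset.univ
      (⟨x, by omega⟩ : Fin (k + 1))).image Fin.val
  else ∅

/-- the dissociation associated with an at-set family -/
def toDelta (S : ℕ → Finset ℕ) : Fin k → Finset (Fin (k + 1)) := fun i =>
  Finset.univ.filter
    (fun v : Fin (k + 1) => 0 < v.val ∧ v.val < k ∧ (i : ℕ) ∈ S v.val ∧ v ∉ chainAtoms k i)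

lemma mem_toDelta {k : ℕ} {S : ℕ → Finset ℕ} {i : Fin k} {v : Fin (k + 1)} :
    v ∈ toDelta k S i ↔
      (0 < v.val ∧ v.val < k ∧ (i : ℕ) ∈ S v.val ∧ v ∉ chainAtoms k i) := by
  simp only [toDelta, Finset.mem_filter, Finset.mem_univ, true_and]

lemma toS_outside {k : ℕ} {Δ : Fin k → Finset (Fin (k + 1))} {x : ℕ}
    (hx : ¬(0 < x ∧ x < k)) : toS k Δ x = ∅ := dif_neg hx

lemma mem_toS {k : ℕ} {Δ : Fin k → Finset (Fin (k + 1))} {x : ℕ}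
    (hx1 : 0 < x) (hx2 : x < k) (i : Fin k) :
    (i : ℕ) ∈ toS k Δ x ↔
      ((⟨x, by omega⟩ : Fin (k + 1)) ∈ chainAtoms k i ∨
        (⟨x, by omega⟩ : Fin (k + 1)) ∈ Δ i) := by
  rw [toS, dif_pos ⟨hx1, hx2⟩]
  simp only [Finset.mem_image, atOf, Finset.mem_filter, Finset.mem_univ, true_and]
  constructor
  · rintro ⟨i', hi', he⟩
    have : i' = i := Fin.val_injective he
    subst this
    exact mem_dissAtoms.1 hi'
  · intro h
    exact ⟨i, mem_dissAtoms.2 h, rfl⟩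

lemma mem_toS' {k : ℕ} {Δ : Fin k → Finset (Fin (k + 1))} {x : ℕ} {n : ℕ}
    (hn : n ∈ toS k Δ x) : ∃ i : Fin k, (i : ℕ) = n := by
  by_cases hx : 0 < x ∧ x < k
  · rw [toS, dif_pos hx] at hn
    simp only [Finset.mem_image] at hn
    obtain ⟨i, _, he⟩ := hn
    exact ⟨i, he⟩
  · rw [toS_outside hx] at hn
    simp at hn

lemma toS_eq_image {k : ℕ} {Δ : Fin k → Finset (Fin (k + 1))} {x : ℕ}
    (hx1 : 0 < x) (hx2 : x < k) :
    toS k Δ x = (atOf (dissAtoms (chainAtoms k) Δ) Finset.univ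
      (⟨x, by omega⟩ : Fin (k + 1))).image Fin.val := by
  rw [toS, dif_pos ⟨hx1, hx2⟩]

lemma isDiss_toDelta (k : ℕ) (hk : 1 ≤ k) (S : ℕ → Finset ℕ) :
    IsDiss (chainAtoms k) (chainH k) (toDelta k S) := by
  intro i v hv
  rw [mem_toDelta] at hv
  simp only [Finset.mem_sdiff, chain_varsOf k hk]
  refine ⟨⟨Finset.mem_univ _, ?_⟩, hv.2.2.2⟩
  rw [mem_chainH]
  omega

lemma toS_toDelta (k : ℕ) {S : ℕ → Finset ℕ} (hS : Good 0 k S) :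
    toS k (toDelta k S) = S := by
  funext x
  by_cases hx : 0 < x ∧ x < k
  · ext n
    constructor
    · intro hn
      obtain ⟨i, hi⟩ := mem_toS' hn
      subst hi
      rw [mem_toS hx.1 hx.2] at hn
      rcases hn with h | h
      · rw [mem_chainAtoms] at h
        have hm := hS.1 x hx.1 hx.2
        simp only at h
        rcases h with h | h
        · have : (i : ℕ) = x := h.symm
          rw [this]; exact hm.2.1
        · have : (i : ℕ) = x - 1 := by omega
          rw [this]; exact hm.1
      · rw [mem_toDelta] at h
        exact h.2.2.1
    · intro hn
      have hnk : n < k := by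
        have := (hS.1 x hx.1 hx.2).2.2 hn
        simp only [Finset.mem_Ico] at this; omega
      have hrepr : ((⟨n, hnk⟩ : Fin k) : ℕ) = n := rfl
      rw [← hrepr, mem_toS hx.1 hx.2]
      by_cases hat : (⟨x, by omega⟩ : Fin (k + 1)) ∈ chainAtoms k ⟨n, hnk⟩
      · exact Or.inl hat
      · refine Or.inr (mem_toDelta.2 ⟨hx.1, hx.2, ?_, hat⟩)
        exact hn
  · rw [toS_outside hx, hS.2.1 x hx]

lemma toDelta_toS (k : ℕ) {Δ : Fin k → Finset (Fin (k + 1))}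
    (hΔ : IsDiss (chainAtoms k) (chainH k) Δ) (hk : 1 ≤ k) :
    toDelta k (toS k Δ) = Δ := by
  funext i
  ext v
  rw [mem_toDelta]
  constructor
  · rintro ⟨h1, h2, h3, h4⟩
    have hv : (⟨v.val, by omega⟩ : Fin (k + 1)) = v := Fin.ext rfl
    rw [mem_toS h1 h2 i, hv] at h3
    rcases h3 with h | h
    · exact absurd h h4
    · exact h
  · intro hv
    have hd := hΔ i hv
    simp only [Finset.mem_sdiff, chain_varsOf k hk, mem_chainH] at hd
    obtain ⟨⟨-, hdH⟩, hdat⟩ := hd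
    push_neg at hdH
    have h1 : 0 < v.val := by omega
    have h2 : v.val < k := by
      have := v.isLt; omega
    refine ⟨h1, h2, ?_, hdat⟩
    have hveq : (⟨v.val, by omega⟩ : Fin (k + 1)) = v := Fin.ext rfl
    rw [mem_toS h1 h2 i, hveq]
    exact Or.inr hv

/-- transfer of the three-way laminar alternatives through `Fin.val` images,
robust to `Decidable` instances -/
lemma tri_transfer {k : ℕ} {s t : Finset (Fin k)} {s' t' : Finset ℕ}
    (hs : s' = s.image Fin.val) (ht : t' = t.image Fin.val) :
    ((s ⊆ t ∨ t ⊆ s ∨ s ∩ t = ∅) → (s' ⊆ t' ∨ t' ⊆ s' ∨ s' ∩ t' = ∅)) ∧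
    ((s' ⊆ t' ∨ t' ⊆ s' ∨ s' ∩ t' = ∅) → (s ⊆ t ∨ t ⊆ s ∨ s ∩ t = ∅)) := by
  subst hs; subst ht
  have himg : ∀ u w : Finset (Fin k),
      u.image Fin.val ⊆ w.image Fin.val ↔ u ⊆ w :=
    fun u w => Finset.image_subset_image_iff Fin.val_injective
  have hdis : ∀ (u w : Finset (Fin k)), (u ∩ w = ∅ ↔
      u.image Fin.val ∩ w.image Fin.val = ∅) := by
    intro u w
    constructor
    · intro h
      apply Finset.eq_empty_iff_forall_notMem.2
      intro n hn
      simp only [Finset.mem_inter] at hn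
      obtain ⟨hn1, hn2⟩ := hn
      simp only [Finset.mem_image] at hn1 hn2
      obtain ⟨i, hi, rfl⟩ := hn1
      obtain ⟨i', hi', he⟩ := hn2
      have : i' = i := Fin.val_injective he
      subst this
      have hmem := Finset.eq_empty_iff_forall_notMem.1 h i'
      simp only [Finset.mem_inter, not_and] at hmem
      exact hmem hi hi'
    · intro h
      apply Finset.eq_empty_iff_forall_notMem.2
      intro i hi
      simp only [Finset.mem_inter] at hi
      have hmem := Finset.eq_empty_iff_forall_notMem.1 h (i : ℕ)
      simp only [Finset.mem_inter, not_and] at hmem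
      exact hmem (Finset.mem_image_of_mem _ hi.1) (Finset.mem_image_of_mem _ hi.2)
  constructor
  · rintro (h | h | h)
    · exact Or.inl ((himg _ _).2 h)
    · exact Or.inr (Or.inl ((himg _ _).2 h))
    · exact Or.inr (Or.inr ((hdis _ _).1 h))
  · rintro (h | h | h)
    · exact Or.inl ((himg _ _).1 h)
    · exact Or.inr (Or.inl ((himg _ _).1 h))
    · exact Or.inr (Or.inr ((hdis _ _).2 h))

lemma safe_iff_good (k : ℕ) (hk : 1 ≤ k) {Δ : Fin k → Finset (Fin (k + 1))}
    (hΔ : IsDiss (chainAtoms k) (chainH k) Δ) :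
    SafeDiss (chainAtoms k) (chainH k) Δ ↔ ChainAux.Good 0 k (toS k Δ) := by
  constructor
  · intro hsafe
    refine ⟨?_, ?_, ?_⟩
    · intro x hx1 hx2
      refine ⟨?_, ?_, ?_⟩
      · have hlt : x - 1 < k := by omega
        have : ((⟨x - 1, hlt⟩ : Fin k) : ℕ) ∈ toS k Δ x := by
          rw [mem_toS hx1 hx2]
          left
          rw [mem_chainAtoms]
          right
          show x = (x - 1) + 1
          omega
        exact this
      · have hlt : x < k := hx2
        have : ((⟨x, hlt⟩ : Fin k) : ℕ) ∈ toS k Δ x := by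
          rw [mem_toS hx1 hx2]
          left
          rw [mem_chainAtoms]
          left
          rfl
        exact this
      · intro n hn
        obtain ⟨i, hi⟩ := mem_toS' hn
        subst hi
        simp only [Finset.mem_Ico]
        exact ⟨Nat.zero_le _, i.isLt⟩
    · intro x hx; exact toS_outside hx
    · intro x y hx1 hx2 hy1 hy2
      have h := hsafe.2 ⟨x, by omega⟩ (not_mem_chainH.2 ⟨hx1, hx2⟩)
        ⟨y, by omega⟩ (not_mem_chainH.2 ⟨hy1, hy2⟩)
      have h' : atOf (dissAtoms (chainAtoms k) Δ) Finset.univ ⟨x, by omega⟩ ⊆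
            atOf (dissAtoms (chainAtoms k) Δ) Finset.univ ⟨y, by omega⟩ ∨
          atOf (dissAtoms (chainAtoms k) Δ) Finset.univ ⟨y, by omega⟩ ⊆
            atOf (dissAtoms (chainAtoms k) Δ) Finset.univ ⟨x, by omega⟩ ∨
          atOf (dissAtoms (chainAtoms k) Δ) Finset.univ ⟨x, by omega⟩ ∩
            atOf (dissAtoms (chainAtoms k) Δ) Finset.univ ⟨y, by omega⟩ = ∅ := by
        rcases h with h | h | h
        · exact Or.inl h
        · right; right
          apply Finset.eq_empty_iff_forall_notMem.2
          intro i hi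
          simp only [Finset.mem_inter] at hi
          have h2 := Finset.eq_empty_iff_forall_notMem.1 h i
          simp only [Finset.mem_inter, not_and] at h2
          exact h2 hi.1 hi.2
        · exact Or.inr (Or.inl h)
      exact (tri_transfer (toS_eq_image hx1 hx2) (toS_eq_image hy1 hy2)).1 h'
  · intro hgood
    refine ⟨hΔ, ?_⟩
    intro vx hvx vy hvy
    rw [not_mem_chainH] at hvx hvy
    have hlam := hgood.2.2 vx.val vy.val hvx.1 hvx.2 hvy.1 hvy.2
    have hex : (⟨vx.val, by omega⟩ : Fin (k + 1)) = vx := Fin.ext rfl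
    have hey : (⟨vy.val, by omega⟩ : Fin (k + 1)) = vy := Fin.ext rfl
    have h := (tri_transfer (toS_eq_image hvx.1 hvx.2) (toS_eq_image hvy.1 hvy.2)).2 hlam
    rw [hex, hey] at h
    rcases h with h | h | h
    · exact Or.inl h
    · exact Or.inr (Or.inr h)
    · right; left
      apply Finset.eq_empty_iff_forall_notMem.2
      intro i hi
      simp only [Finset.mem_inter] at hi
      have h2 := Finset.eq_empty_iff_forall_notMem.1 h i
      simp only [Finset.mem_inter, not_and] at h2
      exact h2 hi.1 hi.2

lemma dissLE_iff (k : ℕ) (hk : 1 ≤ k) {Δ' Δ : Fin k → Finset (Fin (k + 1))}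
    (hΔ' : IsDiss (chainAtoms k) (chainH k) Δ') :
    dissLE Δ' Δ ↔ ∀ x, toS k Δ' x ⊆ toS k Δ x := by
  constructor
  · intro hle x
    by_cases hx : 0 < x ∧ x < k
    · intro n hn
      obtain ⟨i, hi⟩ := mem_toS' hn
      subst hi
      rw [mem_toS hx.1 hx.2] at hn ⊢
      rcases hn with h | h
      · exact Or.inl h
      · exact Or.inr (hle i h)
    · rw [toS_outside hx]; exact Finset.empty_subset _
  · intro hle i v hv
    have hd := hΔ' i hv
    simp only [Finset.mem_sdiff, chain_varsOf k hk, mem_chainH] at hd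
    obtain ⟨⟨-, hdH⟩, hdat⟩ := hd
    push_neg at hdH
    have h1 : 0 < v.val := by omega
    have h2 : v.val < k := by have := v.isLt; omega
    have hveq : (⟨v.val, by omega⟩ : Fin (k + 1)) = v := Fin.ext rfl
    have hmem : (i : ℕ) ∈ toS k Δ' v.val := by
      rw [mem_toS h1 h2 i, hveq]
      exact Or.inr hv
    have := hle v.val hmem
    rw [mem_toS h1 h2 i, hveq] at this
    rcases this with h | h
    · exact absurd h hdat
    · exact h

lemma minSafe_bij (k : ℕ) (hk : 1 ≤ k) :
    Function.Bijective (fun S : {S : ℕ → Finset ℕ // ChainAux.MinGood 0 k S} =>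
      (⟨toDelta k S.1, by
        obtain ⟨S, hS⟩ := S
        have hdiss := isDiss_toDelta k hk S
        constructor
        · rw [safe_iff_good k hk hdiss, toS_toDelta k hS.1]
          exact hS.1
        · intro Δ' hΔ' hle
          have hS' : ChainAux.Good 0 k (toS k Δ') := (safe_iff_good k hk hΔ'.1).1 hΔ'
          have hle' : ∀ x, toS k Δ' x ⊆ S x := by
            have h2 := (dissLE_iff k hk hΔ'.1).1 hle
            have h3 : toS k (toDelta k S) = S := toS_toDelta k hS.1
            intro x
            exact (h2 x).trans (by rw [h3])
          have heq := hS.2 (toS k Δ') hS' hle'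
          rw [← toDelta_toS k hΔ'.1 hk, heq]⟩ :
        {Δ : Fin k → Finset (Fin (k + 1)) //
          MinSafeDiss (chainAtoms k) (chainH k) Δ})) := by
  constructor
  · rintro ⟨S1, hS1⟩ ⟨S2, hS2⟩ heq
    have h : toDelta k S1 = toDelta k S2 := congrArg Subtype.val heq
    apply Subtype.ext
    show S1 = S2
    rw [← toS_toDelta k hS1.1, ← toS_toDelta k hS2.1, h]
  · rintro ⟨Δ, hΔ⟩
    have hdiss : IsDiss (chainAtoms k) (chainH k) Δ := hΔ.1.1
    have hgood : ChainAux.Good 0 k (toS k Δ) := (safe_iff_good k hk hdiss).1 hΔ.1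
    have hmin : ChainAux.MinGood 0 k (toS k Δ) := by
      refine ⟨hgood, ?_⟩
      intro S' hS' hle
      have hdiss' := isDiss_toDelta k hk S'
      have hsafe' : SafeDiss (chainAtoms k) (chainH k) (toDelta k S') := by
        rw [safe_iff_good k hk hdiss', toS_toDelta k hS']
        exact hS'
      have hle' : dissLE (toDelta k S') Δ := by
        rw [dissLE_iff k hk hdiss', toS_toDelta k hS']
        exact hle
      have heq := hΔ.2 (toDelta k S') hsafe' hle'
      rw [← toS_toDelta k hS', heq]
    exact ⟨⟨toS k Δ, hmin⟩, Subtype.ext (toDelta_toS k hdiss hk)⟩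

lemma chain_count (k : ℕ) (hk : 1 ≤ k) :
    {Δ : Fin k → Finset (Fin (k + 1)) |
        MinSafeDiss (chainAtoms k) (chainH k) Δ}.ncard = catalan (k - 1) := by
  have h1 : {Δ : Fin k → Finset (Fin (k + 1)) |
      MinSafeDiss (chainAtoms k) (chainH k) Δ}.ncard
      = Nat.card {Δ : Fin k → Finset (Fin (k + 1)) //
          MinSafeDiss (chainAtoms k) (chainH k) Δ} := rfl
  rw [h1, ← Nat.card_eq_of_bijective _ (minSafe_bij k hk)]
  have := ChainAux.card_minGood k hk 0
  rwa [zero_add] at this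

end ChainTransport

/-- Number of minimal plans of chain queries.  For every `k ≥ 2`, the
`k`-chain query `q(x_0,x_k) :- R_1(x_0,x_1), …, R_k(x_{k−1},x_k)` (whose head variables
`x_0` and `x_k` are treated as constants) has exactly `C_{k−1}` minimal safe dissociations
(equivalently, minimal query plans), where `C_n` is the `n`-th Catalan number; in
particular, the `8`-chain query has `429` of them. -/
theorem chain_query_minimal_dissociation_count :
    (∀ k : ℕ, 2 ≤ k →
      {Δ : Fin k → Finset (Fin (k + 1)) |
          MinSafeDiss (fun i : Fin k => {i.castSucc, i.succ})
            ({0, Fin.last k} : Finset (Fin (k + 1))) Δ}.ncard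
        = catalan (k - 1)) ∧
    {Δ : Fin 8 → Finset (Fin 9) |
        MinSafeDiss (fun i : Fin 8 => {i.castSucc, i.succ})
          ({0, Fin.last 8} : Finset (Fin 9)) Δ}.ncard = 429 := by
  have main : ∀ k : ℕ, 2 ≤ k →
      {Δ : Fin k → Finset (Fin (k + 1)) |
          MinSafeDiss (fun i : Fin k => {i.castSucc, i.succ})
            ({0, Fin.last k} : Finset (Fin (k + 1))) Δ}.ncard
        = catalan (k - 1) := by
    intro k hk
    exact chain_count k (by omega)
  refine ⟨main, ?_⟩
  rw [main 8 (by norm_num)]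
  show catalan 7 = 429
  have c2 : catalan 2 = 2 := by
    rw [catalan_succ]; norm_num [Fin.sum_univ_succ, catalan_zero, catalan_one]
  have c3 : catalan 3 = 5 := by
    rw [catalan_succ]; norm_num [Fin.sum_univ_succ, catalan_zero, catalan_one, c2]
  have c4 : catalan 4 = 14 := by
    rw [catalan_succ]; norm_num [Fin.sum_univ_succ, catalan_zero, catalan_one, c2, c3]
  have c5 : catalan 5 = 42 := by
    rw [catalan_succ]; norm_num [Fin.sum_univ_succ, catalan_zero, catalan_one, c2, c3, c4]
  have c6 : catalan 6 = 132 := by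
    rw [catalan_succ]; norm_num [Fin.sum_univ_succ, catalan_zero, catalan_one, c2, c3, c4, c5]
  rw [catalan_succ]
  norm_num [Fin.sum_univ_succ, catalan_zero, catalan_one, c2, c3, c4, c5, c6]

end

end PDB
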